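/- Assume the Kirszbraun extension property: every 1-Lipschitz (nonexpansive) map F from a finite subset S of ℝ² to a metric space X extends to a 1-Lipschitz map ℝ² → X. If f : {ā₁,ā₂,ā₃} → X is an isometry onto {a₁,a₂,a₃} where (ā₁,ā₂,ā₃) is the comparison triangle of (a₁,a₂,a₃), then r(a₁,a₂,a₃) ≤ r(ā₁,ā₂,ā₃). -/
import Mathlib


/-- Assuming the Kirszbraun extension property for maps from finite subsets of the
Euclidean plane into `X`, any triangle in `X` has circumradius at most the circumradius
of its Euclidean comparison triangle. -/
theorem circumradius_le_of_kirszbraun {X : Type*} [MetricSpace X]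
    (hKirszbraun : ∀ (S : Finset (EuclideanSpace ℝ (Fin 2)))
      (f : EuclideanSpace ℝ (Fin 2) → X), LipschitzOnWith 1 f (S : Set (EuclideanSpace ℝ (Fin 2))) →
      ∃ F : EuclideanSpace ℝ (Fin 2) → X, LipschitzWith 1 F ∧ ∀ s ∈ S, F s = f s)
    (a₁ a₂ a₃ : X) (b₁ b₂ b₃ : EuclideanSpace ℝ (Fin 2))
    (h₁₂ : ‖b₁ - b₂‖ = dist a₁ a₂) (h₁₃ : ‖b₁ - b₃‖ = dist a₁ a₃)
    (h₂₃ : ‖b₂ - b₃‖ = dist a₂ a₃) :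
    (⨅ x : X, max (max (dist x a₁) (dist x a₂)) (dist x a₃)) ≤
      ⨅ x : EuclideanSpace ℝ (Fin 2), max (max ‖x - b₁‖ ‖x - b₂‖) ‖x - b₃‖ := by
  classical
  set f : EuclideanSpace ℝ (Fin 2) → X := fun x =>
    if x = b₁ then a₁ else if x = b₂ then a₂ else a₃ with hf
  have f1 : f b₁ = a₁ := by simp [hf]
  have f2 : f b₂ = a₂ := by
    by_cases h : b₂ = b₁
    · have : a₁ = a₂ := dist_eq_zero.mp (by rw [← h₁₂, h, sub_self, norm_zero])
      simp [hf, h, this]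
    · simp [hf, h]
  have f3 : f b₃ = a₃ := by
    by_cases h : b₃ = b₁
    · have : a₁ = a₃ := dist_eq_zero.mp (by rw [← h₁₃, h, sub_self, norm_zero])
      simp [hf, h, this]
    · by_cases h' : b₃ = b₂
      · have : a₂ = a₃ := dist_eq_zero.mp (by rw [← h₂₃, h', sub_self, norm_zero])
        rw [h', f2]; exact this
      · simp [hf, h, h']
  have e12 : dist a₁ a₂ = dist b₁ b₂ := by rw [dist_eq_norm, ← h₁₂]
  have e13 : dist a₁ a₃ = dist b₁ b₃ := by rw [dist_eq_norm, ← h₁₃]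
  have e23 : dist a₂ a₃ = dist b₂ b₃ := by rw [dist_eq_norm, ← h₂₃]
  set S : Finset (EuclideanSpace ℝ (Fin 2)) := {b₁, b₂, b₃} with hS
  have hlip : LipschitzOnWith 1 f (S : Set (EuclideanSpace ℝ (Fin 2))) := by
    rw [lipschitzOnWith_iff_dist_le_mul]
    intro p hp q hq
    simp only [NNReal.coe_one, one_mul]
    simp only [hS, Finset.coe_insert, Finset.coe_singleton, Set.mem_insert_iff,
      Set.mem_singleton_iff] at hp hq
    rcases hp with rfl | rfl | rfl <;> rcases hq with rfl | rfl | rfl <;>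
      simp [f1, f2, f3, e12, e13, e23, dist_comm]
  obtain ⟨F, hF, hFs⟩ := hKirszbraun S f hlip
  have F1 : F b₁ = a₁ := by rw [hFs b₁ (by simp [hS]), f1]
  have F2 : F b₂ = a₂ := by rw [hFs b₂ (by simp [hS]), f2]
  have F3 : F b₃ = a₃ := by rw [hFs b₃ (by simp [hS]), f3]
  have hbdd : BddBelow (Set.range fun x : X =>
      max (max (dist x a₁) (dist x a₂)) (dist x a₃)) := by
    refine ⟨0, ?_⟩
    rintro _ ⟨x, rfl⟩
    positivity
  refine le_ciInf fun y => ?_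
  refine le_trans (ciInf_le hbdd (F y)) ?_
  have d1 : dist (F y) a₁ ≤ ‖y - b₁‖ := by
    rw [← F1, ← dist_eq_norm]; simpa using hF.dist_le_mul y b₁
  have d2 : dist (F y) a₂ ≤ ‖y - b₂‖ := by
    rw [← F2, ← dist_eq_norm]; simpa using hF.dist_le_mul y b₂
  have d3 : dist (F y) a₃ ≤ ‖y - b₃‖ := by
    rw [← F3, ← dist_eq_norm]; simpa using hF.dist_le_mul y b₃
  exact max_le_max (max_le_max d1 d2) d3
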